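/- For every integer N ≥ 2, all indices 1 ≤ i ≤ N and 1 ≤ j ≤ N−1, and every smooth complex-valued function f of the variables T_{k,i}, the Gauss–Givental operators satisfy the commutation relation E_{i,i}(E_{j+1,j} f) − E_{j+1,j}(E_{i,i} f) = (δ_{i,j+1} − δ_{i,j}) · E_{j+1,j} f. -/

import Mathlib

noncomputable section

/-- Value of the variable `T_{k,i}` (1-based indices), with the convention that
`T_{k,i} = 0` whenever `(k,i)` does not satisfy `1 ≤ i ≤ k ≤ N-1`
(in particular `T_{N,i} = 0`). -/
def tv (N : ℕ) (T : (Fin N × Fin N) → ℝ) (k i : ℕ) : ℝ :=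
  if h : 1 ≤ i ∧ i ≤ k ∧ k ≤ N - 1 then T (⟨k - 1, by omega⟩, ⟨i - 1, by omega⟩) else 0

/-- Partial derivative `∂f/∂T_{k,i}` (1-based indices), with the convention that it is
zero whenever `(k,i)` does not satisfy `1 ≤ i ≤ k ≤ N-1`. -/
def pd (N : ℕ) (f : ((Fin N × Fin N) → ℝ) → ℂ) (k i : ℕ) (T : (Fin N × Fin N) → ℝ) : ℂ :=
  if h : 1 ≤ i ∧ i ≤ k ∧ k ≤ N - 1 then
    fderiv ℝ f T (Pi.single ((⟨k - 1, by omega⟩ : Fin N), (⟨i - 1, by omega⟩ : Fin N)) 1)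
  else 0

/-- The Gauss–Givental Cartan operator `E_{i,i}`. -/
def Ed (N : ℕ) (μ : ℕ → ℂ) (i : ℕ) (f : ((Fin N × Fin N) → ℝ) → ℂ)
    (T : (Fin N × Fin N) → ℝ) : ℂ :=
  μ i * f T + ∑ k ∈ Finset.Icc 1 (i - 1), pd N f (N + k - i) k T
    - ∑ k ∈ Finset.Icc i (N - 1), pd N f k i T

/-- The Gauss–Givental raising operator `E_{i,i+1}`. -/
def Er (N : ℕ) (i : ℕ) (f : ((Fin N × Fin N) → ℝ) → ℂ) (T : (Fin N × Fin N) → ℝ) : ℂ :=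
  ∑ n ∈ Finset.Icc 1 i,
    (∑ k ∈ Finset.Icc n i, (Real.exp (tv N T (N + k - i) k - tv N T (N + k - i - 1) k) : ℂ)) *
      (pd N f (N + n - i - 1) n T - pd N f (N + n - i - 1) (n - 1) T)

/-- The Gauss–Givental lowering operator `E_{i+1,i}`. -/
def El (N : ℕ) (μ : ℕ → ℂ) (i : ℕ) (f : ((Fin N × Fin N) → ℝ) → ℂ)
    (T : (Fin N × Fin N) → ℝ) : ℂ :=
  ∑ k ∈ Finset.Icc i (N - 1),
    (Real.exp (tv N T k i - tv N T (k + 1) (i + 1)) : ℂ) *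
      ((μ i - μ (i + 1)) * f T + ∑ s ∈ Finset.Icc i k, (pd N f s (i + 1) T - pd N f s i T))

namespace GG
variable {N : ℕ} {f g h : ((Fin N × Fin N) → ℝ) → ℂ} {T : (Fin N × Fin N) → ℝ}

/-! ### basic calculus lemmas for `pd` -/

lemma pd_neg {k i : ℕ} (hki : ¬ (1 ≤ i ∧ i ≤ k ∧ k ≤ N - 1)) (f) (T) :
    pd N f k i T = 0 := dif_neg hki

lemma pd_const (k i : ℕ) (c : ℂ) (T) : pd N (fun _ => c) k i T = 0 := by
  unfold pd; split
  · rw [fderiv_fun_const]; simp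
  · rfl

lemma pd_add (hg : DifferentiableAt ℝ g T) (hh : DifferentiableAt ℝ h T) (k i : ℕ) :
    pd N (fun S => g S + h S) k i T = pd N g k i T + pd N h k i T := by
  unfold pd; split
  · rw [fderiv_fun_add hg hh]; rfl
  · simp

lemma pd_sub (hg : DifferentiableAt ℝ g T) (hh : DifferentiableAt ℝ h T) (k i : ℕ) :
    pd N (fun S => g S - h S) k i T = pd N g k i T - pd N h k i T := by
  unfold pd; split
  · rw [fderiv_fun_sub hg hh]; rfl
  · simp

lemma pd_const_mul (hg : DifferentiableAt ℝ g T) (c : ℂ) (k i : ℕ) :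
    pd N (fun S => c * g S) k i T = c * pd N g k i T := by
  unfold pd; split
  · rw [fderiv_const_mul hg c]; rfl
  · simp

lemma pd_sum {α : Type*} (s : Finset α) (F : α → ((Fin N × Fin N) → ℝ) → ℂ)
    (hF : ∀ x ∈ s, DifferentiableAt ℝ (F x) T) (k i : ℕ) :
    pd N (fun S => ∑ x ∈ s, F x S) k i T = ∑ x ∈ s, pd N (F x) k i T := by
  unfold pd; split
  · rw [fderiv_fun_sum hF]; simp
  · simp

lemma pd_mul (hg : DifferentiableAt ℝ g T) (hh : DifferentiableAt ℝ h T) (k i : ℕ) :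
    pd N (fun S => g S * h S) k i T = pd N g k i T * h T + g T * pd N h k i T := by
  unfold pd; split
  · rw [fderiv_fun_mul hg hh]; simp; ring
  · simp

lemma contDiff_pd (hf : ContDiff ℝ (⊤:ℕ∞) f) (k i : ℕ) :
    ContDiff ℝ (⊤:ℕ∞) (fun S => pd N f k i S) := by
  unfold pd; split
  · exact (ContinuousLinearMap.apply ℝ ℂ _).contDiff.comp
      (hf.fderiv_right (m := (⊤:ℕ∞)) (by norm_cast))
  · exact contDiff_const

lemma diff_pd (hf : ContDiff ℝ (⊤:ℕ∞) f) (k i : ℕ) :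
    DifferentiableAt ℝ (fun S => pd N f k i S) T :=
  ((contDiff_pd hf k i).differentiable (by norm_cast)).differentiableAt

lemma pd_comm (hf : ContDiff ℝ (⊤:ℕ∞) f) (a b k i : ℕ) (T) :
    pd N (fun S => pd N f a b S) k i T = pd N (fun S => pd N f k i S) a b T := by
  by_cases hab : 1 ≤ b ∧ b ≤ a ∧ a ≤ N - 1
  · by_cases hki : 1 ≤ i ∧ i ≤ k ∧ k ≤ N - 1
    · have hd : DifferentiableAt ℝ (fderiv ℝ f) T :=
        ((hf.fderiv_right (m := (⊤:ℕ∞)) (by norm_cast)).differentiable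
          (by norm_cast)).differentiableAt
      have h1 : ∀ u : (Fin N × Fin N) → ℝ, fderiv ℝ (fun S => fderiv ℝ f S u) T
          = (fderiv ℝ (fderiv ℝ f) T).flip u := by
        intro u
        rw [fderiv_clm_apply hd (differentiableAt_const u)]
        simp
      have hsymm := hf.contDiffAt.isSymmSndFDerivAt (x := T) (by simp; exact WithTop.coe_le_coe.mpr le_top)
      rw [pd, dif_pos hki, pd, dif_pos hab]
      simp only [pd, dif_pos hab, dif_pos hki]
      rw [h1, h1]
      exact hsymm _ _
    · rw [pd_neg hki, pd, dif_pos hab]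
      have h2 : (fun S => pd N f k i S) = (fun _ => (0:ℂ)) := funext fun S => pd_neg hki f S
      rw [h2, fderiv_fun_const]
      simp
  · rw [pd_neg hab]
    have h2 : (fun S => pd N f a b S) = (fun _ => (0:ℂ)) := funext fun S => pd_neg hab f S
    rw [h2, pd_const]

/-! ### derivatives of the exponential factors -/

def tvd (N : ℕ) (k i : ℕ) : ((Fin N × Fin N) → ℝ) →L[ℝ] ℝ :=
  if h : 1 ≤ i ∧ i ≤ k ∧ k ≤ N - 1 then
    ContinuousLinearMap.proj (⟨k - 1, by omega⟩, ⟨i - 1, by omega⟩) else 0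

lemma hasFDerivAt_tv (k i : ℕ) (T : (Fin N × Fin N) → ℝ) :
    HasFDerivAt (fun S => tv N S k i) (tvd N k i) T := by
  by_cases hki : 1 ≤ i ∧ i ≤ k ∧ k ≤ N - 1
  · simp only [tv, dif_pos hki, tvd]
    exact (ContinuousLinearMap.proj _ : ((Fin N × Fin N) → ℝ) →L[ℝ] ℝ).hasFDerivAt
  · simp only [tv, dif_neg hki, tvd]
    exact hasFDerivAt_const _ _

lemma tvd_apply (a b k i : ℕ) (hki : 1 ≤ i ∧ i ≤ k ∧ k ≤ N - 1) :
    tvd N a b (Pi.single ((⟨k - 1, by omega⟩ : Fin N), (⟨i - 1, by omega⟩ : Fin N)) 1)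
      = if a = k ∧ b = i then 1 else 0 := by
  unfold tvd
  split
  case isTrue hab =>
    simp only [ContinuousLinearMap.proj_apply, Pi.single_apply]
    by_cases he : a = k ∧ b = i
    · obtain ⟨rfl, rfl⟩ := he
      simp
    · rw [if_neg he, if_neg]
      intro hcon
      apply he
      rw [Prod.mk.injEq, Fin.mk.injEq, Fin.mk.injEq] at hcon
      omega
  case isFalse hab =>
    rw [if_neg]
    · simp
    · rintro ⟨rfl, rfl⟩; exact hab hki

lemma contDiff_tv (a b : ℕ) :
    ContDiff ℝ (⊤:ℕ∞) (fun S : (Fin N × Fin N) → ℝ => tv N S a b) := by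
  by_cases hab : 1 ≤ b ∧ b ≤ a ∧ a ≤ N - 1
  · have h : (fun S : (Fin N × Fin N) → ℝ => tv N S a b)
        = fun S => S (⟨a - 1, by omega⟩, ⟨b - 1, by omega⟩) := by
      funext S; simp [tv, hab]
    rw [h]
    exact (ContinuousLinearMap.proj _ : ((Fin N × Fin N) → ℝ) →L[ℝ] ℝ).contDiff
  · have h : (fun S : (Fin N × Fin N) → ℝ => tv N S a b) = fun _ => 0 := by
      funext S; simp [tv, hab]
    rw [h]; exact contDiff_const

lemma contDiff_exp_tv (a b c d : ℕ) :
    ContDiff ℝ (⊤:ℕ∞) (fun S : (Fin N × Fin N) → ℝ =>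
      ((Real.exp (tv N S a b - tv N S c d) : ℝ) : ℂ)) :=
  Complex.ofRealCLM.contDiff.comp
    (Real.contDiff_exp.comp ((contDiff_tv a b).sub (contDiff_tv c d)))

lemma pd_exp (a b c d k i : ℕ) (hki : 1 ≤ i ∧ i ≤ k ∧ k ≤ N - 1)
    (T : (Fin N × Fin N) → ℝ) :
    pd N (fun S => ((Real.exp (tv N S a b - tv N S c d) : ℝ) : ℂ)) k i T
      = (Real.exp (tv N T a b - tv N T c d) : ℂ) *
        (((if a = k ∧ b = i then 1 else 0) : ℂ) - (if c = k ∧ d = i then 1 else 0)) := by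
  have h1 : HasFDerivAt (fun S : (Fin N × Fin N) → ℝ => tv N S a b - tv N S c d)
      (tvd N a b - tvd N c d) T := (hasFDerivAt_tv a b T).sub (hasFDerivAt_tv c d T)
  have h2 := h1.exp
  have h3 : HasFDerivAt (fun S : (Fin N × Fin N) → ℝ =>
      ((Real.exp (tv N S a b - tv N S c d) : ℝ) : ℂ))
      (Complex.ofRealCLM.comp (Real.exp (tv N T a b - tv N T c d) • (tvd N a b - tvd N c d)))
      T := Complex.ofRealCLM.hasFDerivAt.comp T h2
  rw [pd, dif_pos hki, h3.fderiv]
  simp only [ContinuousLinearMap.coe_comp', Function.comp_apply,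
    ContinuousLinearMap.coe_smul', Pi.smul_apply, ContinuousLinearMap.sub_apply,
    Complex.ofRealCLM_apply, tvd_apply a b k i hki, tvd_apply c d k i hki,
    smul_eq_mul]
  split_ifs <;> push_cast <;> ring

/-! ### building blocks of the operators -/

def Dv (N i : ℕ) (f : ((Fin N × Fin N) → ℝ) → ℂ) (T : (Fin N × Fin N) → ℝ) : ℂ :=
  (∑ a ∈ Finset.Icc 1 (i - 1), pd N f (N + a - i) a T)
    - ∑ a ∈ Finset.Icc i (N - 1), pd N f a i T

def Ef (N j k : ℕ) : ((Fin N × Fin N) → ℝ) → ℂ :=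
  fun S => ((Real.exp (tv N S k j - tv N S (k + 1) (j + 1)) : ℝ) : ℂ)

def Gf (N : ℕ) (μ : ℕ → ℂ) (j k : ℕ) (f : ((Fin N × Fin N) → ℝ) → ℂ) :
    ((Fin N × Fin N) → ℝ) → ℂ :=
  fun S => (μ j - μ (j + 1)) * f S
    + ∑ s ∈ Finset.Icc j k, (pd N f s (j + 1) S - pd N f s j S)

lemma El_eq (N : ℕ) (μ : ℕ → ℂ) (j : ℕ) (g : ((Fin N × Fin N) → ℝ) → ℂ) (T) :
    El N μ j g T = ∑ k ∈ Finset.Icc j (N - 1), Ef N j k T * Gf N μ j k g T := rfl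

lemma Ed_eq (N : ℕ) (μ : ℕ → ℂ) (i : ℕ) (g : ((Fin N × Fin N) → ℝ) → ℂ) (T) :
    Ed N μ i g T = μ i * g T + Dv N i g T := by
  rw [Ed, Dv, add_sub_assoc]


variable {μ : ℕ → ℂ} {i j : ℕ}

lemma diff_f (hf : ContDiff ℝ (⊤:ℕ∞) f) : DifferentiableAt ℝ f T :=
  ((hf.differentiable (by norm_cast))).differentiableAt

lemma diff_Ef (j k : ℕ) : DifferentiableAt ℝ (Ef N j k) T :=
  ((contDiff_exp_tv k j (k + 1) (j + 1)).differentiable (by norm_cast)).differentiableAt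

lemma diff_Gf (hf : ContDiff ℝ (⊤:ℕ∞) f) (j k : ℕ) :
    DifferentiableAt ℝ (Gf N μ j k f) T := by
  unfold Gf
  exact ((diff_f hf).const_mul _).add
    (DifferentiableAt.fun_sum fun s _ => (diff_pd hf s (j + 1)).fun_sub (diff_pd hf s j))

lemma diff_Dv (hf : ContDiff ℝ (⊤:ℕ∞) f) :
    DifferentiableAt ℝ (fun S => Dv N i f S) T := by
  have h0 : (fun S => Dv N i f S)
      = fun S => (∑ a ∈ Finset.Icc 1 (i - 1), pd N f (N + a - i) a S)
          - ∑ a ∈ Finset.Icc i (N - 1), pd N f a i S := rfl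
  rw [h0]
  exact (DifferentiableAt.fun_sum fun a _ => diff_pd hf _ _).fun_sub
    (DifferentiableAt.fun_sum fun a _ => diff_pd hf _ _)

lemma pd_Dv (hf : ContDiff ℝ (⊤:ℕ∞) f) (s t : ℕ) :
    pd N (fun S => Dv N i f S) s t T = Dv N i (fun S => pd N f s t S) T := by
  have h0 : (fun S => Dv N i f S)
      = fun S => (∑ a ∈ Finset.Icc 1 (i - 1), pd N f (N + a - i) a S)
          - ∑ a ∈ Finset.Icc i (N - 1), pd N f a i S := rfl
  rw [h0, pd_sub (DifferentiableAt.fun_sum fun a _ => diff_pd hf _ _)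
      (DifferentiableAt.fun_sum fun a _ => diff_pd hf _ _),
    pd_sum _ _ (fun a _ => diff_pd hf _ _), pd_sum _ _ (fun a _ => diff_pd hf _ _), Dv]
  congr 1 <;> exact Finset.sum_congr rfl fun a _ => pd_comm hf _ _ _ _ T

lemma pd_Ed (hf : ContDiff ℝ (⊤:ℕ∞) f) (s t : ℕ) :
    pd N (fun S => Ed N μ i f S) s t T
      = μ i * pd N f s t T + Dv N i (fun S => pd N f s t S) T := by
  have he : (fun S => Ed N μ i f S) = fun S => μ i * f S + Dv N i f S := by
    funext S; rw [Ed_eq]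
  rw [he, pd_add ((diff_f hf).const_mul _) (diff_Dv hf), pd_const_mul (diff_f hf),
    pd_Dv hf]

lemma pd_Gf (hf : ContDiff ℝ (⊤:ℕ∞) f) (k p q : ℕ) :
    pd N (Gf N μ j k f) p q T
      = (μ j - μ (j + 1)) * pd N f p q T
        + ∑ s ∈ Finset.Icc j k, (pd N (fun S => pd N f s (j + 1) S) p q T
            - pd N (fun S => pd N f s j S) p q T) := by
  unfold Gf
  rw [pd_add ((diff_f hf).const_mul _)
      (DifferentiableAt.fun_sum fun s _ => (diff_pd hf s (j + 1)).fun_sub (diff_pd hf s j)),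
    pd_const_mul (diff_f hf),
    pd_sum _ _ (fun s _ => (diff_pd hf s (j + 1)).fun_sub (diff_pd hf s j))]
  congr 1
  exact Finset.sum_congr rfl fun s _ => pd_sub (diff_pd hf s (j + 1)) (diff_pd hf s j) p q

lemma Dv_Gf (hf : ContDiff ℝ (⊤:ℕ∞) f) (k : ℕ) :
    Dv N i (Gf N μ j k f) T
      = (μ j - μ (j + 1)) * Dv N i f T
        + ∑ s ∈ Finset.Icc j k, (Dv N i (fun S => pd N f s (j + 1) S) T
            - Dv N i (fun S => pd N f s j S) T) := by
  rw [Dv, Finset.sum_congr rfl (fun a _ => pd_Gf hf k _ _),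
    Finset.sum_congr rfl (fun a _ => pd_Gf hf k _ _)]
  rw [Finset.sum_add_distrib, Finset.sum_add_distrib, ← Finset.mul_sum, ← Finset.mul_sum]
  have e1 : ∑ a ∈ Finset.Icc 1 (i - 1), ∑ s ∈ Finset.Icc j k,
        (pd N (fun S => pd N f s (j + 1) S) (N + a - i) a T
          - pd N (fun S => pd N f s j S) (N + a - i) a T)
      = ∑ s ∈ Finset.Icc j k, ∑ a ∈ Finset.Icc 1 (i - 1),
        (pd N (fun S => pd N f s (j + 1) S) (N + a - i) a T
          - pd N (fun S => pd N f s j S) (N + a - i) a T) := Finset.sum_comm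
  have e2 : ∑ a ∈ Finset.Icc i (N - 1), ∑ s ∈ Finset.Icc j k,
        (pd N (fun S => pd N f s (j + 1) S) a i T
          - pd N (fun S => pd N f s j S) a i T)
      = ∑ s ∈ Finset.Icc j k, ∑ a ∈ Finset.Icc i (N - 1),
        (pd N (fun S => pd N f s (j + 1) S) a i T
          - pd N (fun S => pd N f s j S) a i T) := Finset.sum_comm
  rw [e1, e2]
  simp only [Finset.sum_sub_distrib, Dv]
  ring

lemma pd_El (hf : ContDiff ℝ (⊤:ℕ∞) f) (p q : ℕ) :
    pd N (fun S => El N μ j f S) p q T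
      = (∑ k ∈ Finset.Icc j (N - 1), pd N (Ef N j k) p q T * Gf N μ j k f T)
        + ∑ k ∈ Finset.Icc j (N - 1), Ef N j k T * pd N (Gf N μ j k f) p q T := by
  have h0 : (fun S => El N μ j f S)
      = fun S => ∑ k ∈ Finset.Icc j (N - 1), Ef N j k S * Gf N μ j k f S := rfl
  rw [h0, pd_sum _ _ (fun k _ => (diff_Ef j k).fun_mul (diff_Gf hf j k)),
    ← Finset.sum_add_distrib]
  exact Finset.sum_congr rfl fun k _ => pd_mul (diff_Ef j k) (diff_Gf hf j k) p q

lemma Dv_El (hf : ContDiff ℝ (⊤:ℕ∞) f) :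
    Dv N i (fun S => El N μ j f S) T
      = (∑ k ∈ Finset.Icc j (N - 1), Dv N i (Ef N j k) T * Gf N μ j k f T)
        + ∑ k ∈ Finset.Icc j (N - 1), Ef N j k T * Dv N i (Gf N μ j k f) T := by
  rw [Dv, Finset.sum_congr rfl (fun a _ => pd_El hf _ _),
    Finset.sum_congr rfl (fun a _ => pd_El hf _ _)]
  rw [Finset.sum_add_distrib, Finset.sum_add_distrib]
  have e1 : ∑ a ∈ Finset.Icc 1 (i - 1), ∑ k ∈ Finset.Icc j (N - 1),
        pd N (Ef N j k) (N + a - i) a T * Gf N μ j k f T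
      = ∑ k ∈ Finset.Icc j (N - 1), ∑ a ∈ Finset.Icc 1 (i - 1),
        pd N (Ef N j k) (N + a - i) a T * Gf N μ j k f T := Finset.sum_comm
  have e2 : ∑ a ∈ Finset.Icc 1 (i - 1), ∑ k ∈ Finset.Icc j (N - 1),
        Ef N j k T * pd N (Gf N μ j k f) (N + a - i) a T
      = ∑ k ∈ Finset.Icc j (N - 1), ∑ a ∈ Finset.Icc 1 (i - 1),
        Ef N j k T * pd N (Gf N μ j k f) (N + a - i) a T := Finset.sum_comm
  have e3 : ∑ a ∈ Finset.Icc i (N - 1), ∑ k ∈ Finset.Icc j (N - 1),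
        pd N (Ef N j k) a i T * Gf N μ j k f T
      = ∑ k ∈ Finset.Icc j (N - 1), ∑ a ∈ Finset.Icc i (N - 1),
        pd N (Ef N j k) a i T * Gf N μ j k f T := Finset.sum_comm
  have e4 : ∑ a ∈ Finset.Icc i (N - 1), ∑ k ∈ Finset.Icc j (N - 1),
        Ef N j k T * pd N (Gf N μ j k f) a i T
      = ∑ k ∈ Finset.Icc j (N - 1), ∑ a ∈ Finset.Icc i (N - 1),
        Ef N j k T * pd N (Gf N μ j k f) a i T := Finset.sum_comm
  rw [e1, e2, e3, e4]
  have r1 : ∑ k ∈ Finset.Icc j (N - 1), Dv N i (Ef N j k) T * Gf N μ j k f T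
      = (∑ k ∈ Finset.Icc j (N - 1), ∑ a ∈ Finset.Icc 1 (i - 1),
          pd N (Ef N j k) (N + a - i) a T * Gf N μ j k f T)
        - ∑ k ∈ Finset.Icc j (N - 1), ∑ a ∈ Finset.Icc i (N - 1),
          pd N (Ef N j k) a i T * Gf N μ j k f T := by
    rw [← Finset.sum_sub_distrib]
    exact Finset.sum_congr rfl fun k _ => by
      rw [Dv, sub_mul, Finset.sum_mul, Finset.sum_mul]
  have r2 : ∑ k ∈ Finset.Icc j (N - 1), Ef N j k T * Dv N i (Gf N μ j k f) T
      = (∑ k ∈ Finset.Icc j (N - 1), ∑ a ∈ Finset.Icc 1 (i - 1),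
          Ef N j k T * pd N (Gf N μ j k f) (N + a - i) a T)
        - ∑ k ∈ Finset.Icc j (N - 1), ∑ a ∈ Finset.Icc i (N - 1),
          Ef N j k T * pd N (Gf N μ j k f) a i T := by
    rw [← Finset.sum_sub_distrib]
    exact Finset.sum_congr rfl fun k _ => by
      rw [Dv, mul_sub, Finset.mul_sum, Finset.mul_sum]
  rw [r1, r2]
  ring

lemma sum_delta' (s : Finset ℕ) (v : ℕ) (C : ℕ → Prop) [DecidablePred C] (w : ℂ)
    (h1 : ∀ a, C a → a = v) (h2 : (if C v then (1:ℂ) else 0) = w) :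
    (∑ a ∈ s, if C a then (1:ℂ) else 0) = if v ∈ s then w else 0 := by
  rw [← Finset.sum_ite_eq' s v (fun _ => w)]
  apply Finset.sum_congr rfl
  intro a _
  by_cases hC : C a
  · have hav := h1 a hC
    subst hav
    rw [if_pos hC, if_pos rfl, ← h2, if_pos hC]
  · rw [if_neg hC]
    by_cases hav : a = v
    · subst hav; rw [if_pos rfl, ← h2, if_neg hC]
    · rw [if_neg hav]


lemma Dv_Ef (hN : 2 ≤ N) (hi1 : 1 ≤ i) (hi2 : i ≤ N) (hj1 : 1 ≤ j) (hj2 : j ≤ N - 1)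
    (k : ℕ) (hk : k ∈ Finset.Icc j (N - 1)) :
    Dv N i (Ef N j k) T
      = (((if i = j + 1 then 1 else 0) : ℂ) - (if i = j then 1 else 0)) * Ef N j k T := by
  rw [Finset.mem_Icc] at hk
  have c1 : ∀ a ∈ Finset.Icc 1 (i - 1), pd N (Ef N j k) (N + a - i) a T
      = ((Real.exp (tv N T k j - tv N T (k + 1) (j + 1)) : ℝ) : ℂ) *
        (((if k = N + a - i ∧ j = a then 1 else 0) : ℂ)
          - (if k + 1 = N + a - i ∧ j + 1 = a then 1 else 0)) := by
    intro a ha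
    rw [Finset.mem_Icc] at ha
    exact pd_exp k j (k + 1) (j + 1) (N + a - i) a ⟨by omega, by omega, by omega⟩ T
  have c2 : ∀ a ∈ Finset.Icc i (N - 1), pd N (Ef N j k) a i T
      = ((Real.exp (tv N T k j - tv N T (k + 1) (j + 1)) : ℝ) : ℂ) *
        (((if k = a ∧ j = i then 1 else 0) : ℂ)
          - (if k + 1 = a ∧ j + 1 = i then 1 else 0)) := by
    intro a ha
    rw [Finset.mem_Icc] at ha
    exact pd_exp k j (k + 1) (j + 1) a i ⟨by omega, by omega, by omega⟩ T
  rw [Dv, Finset.sum_congr rfl c1, Finset.sum_congr rfl c2]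
  rw [← Finset.mul_sum, ← Finset.mul_sum, ← mul_sub]
  have hX : ((∑ a ∈ Finset.Icc 1 (i - 1),
        (((if k = N + a - i ∧ j = a then 1 else 0) : ℂ)
          - (if k + 1 = N + a - i ∧ j + 1 = a then 1 else 0)))
      - ∑ a ∈ Finset.Icc i (N - 1),
        (((if k = a ∧ j = i then 1 else 0) : ℂ)
          - (if k + 1 = a ∧ j + 1 = i then 1 else 0)))
      = (((if i = j + 1 then 1 else 0) : ℂ) - (if i = j then 1 else 0)) := by
    rw [Finset.sum_sub_distrib, Finset.sum_sub_distrib]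
    rw [sum_delta' (Finset.Icc 1 (i - 1)) j (fun a => k = N + a - i ∧ j = a)
        (if k = N + j - i then (1:ℂ) else 0) (fun a h => h.2.symm) (by simp),
      sum_delta' (Finset.Icc 1 (i - 1)) (j + 1) (fun a => k + 1 = N + a - i ∧ j + 1 = a)
        (if k + 1 = N + (j + 1) - i then (1:ℂ) else 0) (fun a h => h.2.symm) (by simp),
      sum_delta' (Finset.Icc i (N - 1)) k (fun a => k = a ∧ j = i)
        (if j = i then (1:ℂ) else 0) (fun a h => h.1.symm) (by simp),
      sum_delta' (Finset.Icc i (N - 1)) (k + 1) (fun a => k + 1 = a ∧ j + 1 = i)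
        (if j + 1 = i then (1:ℂ) else 0) (fun a h => h.1.symm) (by simp)]
    simp only [Finset.mem_Icc]
    split_ifs <;> (try (exfalso; omega)) <;> ring
  rw [hX, show Ef N j k T
      = ((Real.exp (tv N T k j - tv N T (k + 1) (j + 1)) : ℝ) : ℂ) from rfl]
  ring

end GG

/-- the commutation relation
`[E_{i,i}, E_{j+1,j}] = (δ_{i,j+1} − δ_{i,j}) E_{j+1,j}` for the Gauss–Givental operators. -/
theorem commutator_diag_lower (N : ℕ) (hN : 2 ≤ N) (μ : ℕ → ℂ)
    (f : ((Fin N × Fin N) → ℝ) → ℂ) (hf : ContDiff ℝ (⊤ : ℕ∞) f)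
    (i j : ℕ) (hi1 : 1 ≤ i) (hi2 : i ≤ N) (hj1 : 1 ≤ j) (hj2 : j ≤ N - 1)
    (T : (Fin N × Fin N) → ℝ) :
    Ed N μ i (fun S => El N μ j f S) T - El N μ j (fun S => Ed N μ i f S) T
      = (((if i = j + 1 then 1 else 0) : ℂ) - (if i = j then 1 else 0)) * El N μ j f T := by
  have HA : Ed N μ i (fun S => El N μ j f S) T
      = μ i * El N μ j f T
        + ((∑ k ∈ Finset.Icc j (N - 1), GG.Dv N i (GG.Ef N j k) T * GG.Gf N μ j k f T)
          + ∑ k ∈ Finset.Icc j (N - 1), GG.Ef N j k T * GG.Dv N i (GG.Gf N μ j k f) T) := by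
    have h0 : Ed N μ i (fun S => El N μ j f S) T
        = μ i * El N μ j f T + GG.Dv N i (fun S => El N μ j f S) T :=
      GG.Ed_eq N μ i (fun S => El N μ j f S) T
    rw [h0, GG.Dv_El hf]
  have hGk : ∀ k, GG.Gf N μ j k (fun S => Ed N μ i f S) T
      = μ i * GG.Gf N μ j k f T + GG.Dv N i (GG.Gf N μ j k f) T := by
    intro k
    rw [GG.Dv_Gf hf k]
    have hG1 : GG.Gf N μ j k (fun S => Ed N μ i f S) T
        = (μ j - μ (j + 1)) * (μ i * f T + GG.Dv N i f T)
          + ∑ s ∈ Finset.Icc j k,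
            ((μ i * pd N f s (j + 1) T + GG.Dv N i (fun S => pd N f s (j + 1) S) T)
              - (μ i * pd N f s j T + GG.Dv N i (fun S => pd N f s j S) T)) := by
      rw [show GG.Gf N μ j k (fun S => Ed N μ i f S) T
          = (μ j - μ (j + 1)) * (Ed N μ i f T)
            + ∑ s ∈ Finset.Icc j k, (pd N (fun S => Ed N μ i f S) s (j + 1) T
                - pd N (fun S => Ed N μ i f S) s j T) from rfl]
      rw [GG.Ed_eq]
      exact congrArg _ (Finset.sum_congr rfl fun s _ => by
        rw [GG.pd_Ed hf, GG.pd_Ed hf])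
    rw [hG1]
    have e : ∑ s ∈ Finset.Icc j k,
          ((μ i * pd N f s (j + 1) T + GG.Dv N i (fun S => pd N f s (j + 1) S) T)
            - (μ i * pd N f s j T + GG.Dv N i (fun S => pd N f s j S) T))
        = μ i * (∑ s ∈ Finset.Icc j k, (pd N f s (j + 1) T - pd N f s j T))
          + ∑ s ∈ Finset.Icc j k, (GG.Dv N i (fun S => pd N f s (j + 1) S) T
              - GG.Dv N i (fun S => pd N f s j S) T) := by
      rw [Finset.mul_sum, ← Finset.sum_add_distrib]
      exact Finset.sum_congr rfl fun s _ => by ring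
    rw [e, show GG.Gf N μ j k f T = (μ j - μ (j + 1)) * f T
        + ∑ s ∈ Finset.Icc j k, (pd N f s (j + 1) T - pd N f s j T) from rfl]
    ring
  have HB : El N μ j (fun S => Ed N μ i f S) T
      = μ i * El N μ j f T
        + ∑ k ∈ Finset.Icc j (N - 1), GG.Ef N j k T * GG.Dv N i (GG.Gf N μ j k f) T := by
    rw [GG.El_eq, Finset.sum_congr rfl (fun k _ => by rw [hGk k])]
    rw [Finset.sum_congr rfl (fun k _ =>
        (mul_add (GG.Ef N j k T) (μ i * GG.Gf N μ j k f T) (GG.Dv N i (GG.Gf N μ j k f) T)))]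
    rw [Finset.sum_add_distrib]
    congr 1
    rw [GG.El_eq, Finset.mul_sum]
    exact Finset.sum_congr rfl fun k _ => by ring
  rw [HA, HB]
  have hsum : ∑ k ∈ Finset.Icc j (N - 1), GG.Dv N i (GG.Ef N j k) T * GG.Gf N μ j k f T
      = (((if i = j + 1 then 1 else 0) : ℂ) - (if i = j then 1 else 0)) * El N μ j f T := by
    rw [GG.El_eq, Finset.mul_sum]
    exact Finset.sum_congr rfl fun k hk => by
      rw [GG.Dv_Ef hN hi1 hi2 hj1 hj2 k hk, mul_assoc]
  rw [← hsum]
  ring
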